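/- Let A be a unital C*-algebra with character ε, K a Hilbert space, and suppose given linear maps δ: A → B(ℂ;K), γ: A → B(k;K), a functional λ: A → ℂ, and a map η: A → B(ℂ;k) such that for all a, b ∈ A: δ(a)*δ(b) = λ(a*b) − ε(a*)λ(b) − λ(a*)ε(b) + ε(a*)λ(1)ε(b) and γ(a)*δ(b) = η(a*b) − η(a*)ε(b), and δ(a)*γ(b), γ(a)*γ(b) are determined by maps ν, σ via γ(a)*γ(b) = σ(a*b). For a unitary u ∈ A, define δ_u(a) = δ(ua) − δ(u)ε(a) and γ_u(a) = γ(ua). Then for all a₁, a₂ ∈ A and the column maps χ = [δ γ], χ_u = [δ_u γ_u] (from A to B(ℂ ⊕ k; K)) one has χ_u(a₁)* χ_u(a₂) = χ(a₁)* χ(a₂). -/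

import Mathlib

/-- Unitary twisting `δ_u(a) = δ(ua) − δ(u)ε(a)`, `γ_u(a) = γ(ua)` leaves the Kolmogorov
kernel `χ(a₁)*χ(a₂)` of `χ = [δ γ]` invariant: all four block entries of
`χ_u(a₁)*χ_u(a₂)` agree with those of `χ(a₁)*χ(a₂)`. -/
theorem stmt_13 {A : Type*} [NormedRing A] [StarRing A] [CStarRing A]
    [NormedAlgebra ℂ A] [StarModule ℂ A]
    {k K : Type*}
    [NormedAddCommGroup k] [InnerProductSpace ℂ k] [CompleteSpace k]
    [NormedAddCommGroup K] [InnerProductSpace ℂ K] [CompleteSpace K]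
    (ε : A →⋆ₐ[ℂ] ℂ)
    (δ : A → K) (γ : A → (k →L[ℂ] K)) (lam : A → ℂ) (η : A → k)
    (σ : A → (k →L[ℂ] k))
    (h1 : ∀ a b : A, (inner ℂ (δ a) (δ b) : ℂ)
      = lam (star a * b) - ε (star a) * lam b - lam (star a) * ε b
          + ε (star a) * lam 1 * ε b)
    (h2 : ∀ a b : A, ContinuousLinearMap.adjoint (γ a) (δ b)
      = η (star a * b) - ε b • η (star a))
    (h3 : ∀ (a b : A) (c : k), (inner ℂ (δ a) (γ b c) : ℂ)
      = (inner ℂ (η (star b * a) - ε a • η (star b)) c : ℂ))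
    (h4 : ∀ a b : A, ContinuousLinearMap.adjoint (γ a) ∘L γ b = σ (star a * b))
    (u : A) (hu : u ∈ unitary A)
    (δu : A → K) (hδu : ∀ a : A, δu a = δ (u * a) - ε a • δ u)
    (γu : A → (k →L[ℂ] K)) (hγu : ∀ a : A, γu a = γ (u * a)) :
    ∀ a b : A,
      ((inner ℂ (δu a) (δu b) : ℂ) = (inner ℂ (δ a) (δ b) : ℂ))
      ∧ (ContinuousLinearMap.adjoint (γu a) (δu b)
          = ContinuousLinearMap.adjoint (γ a) (δ b))
      ∧ (∀ c : k, (inner ℂ (δu a) (γu b c) : ℂ) = (inner ℂ (δ a) (γ b c) : ℂ))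
      ∧ (ContinuousLinearMap.adjoint (γu a) ∘L γu b
          = ContinuousLinearMap.adjoint (γ a) ∘L γ b) := by
  have hu1 : star u * u = 1 := hu.1
  intro a b
  have key : ∀ x y : A, star (u * x) * (u * y) = star x * y := by
    intro x y
    rw [star_mul, mul_assoc, ← mul_assoc (star u), hu1, one_mul]
  have key2 : ∀ x : A, star (u * x) * u = star x := by
    intro x
    rw [star_mul, mul_assoc, hu1, mul_one]
  have key3 : ∀ y : A, star u * (u * y) = y := by
    intro y
    rw [← mul_assoc, hu1, one_mul]
  have hconj : ∀ x : A, (starRingEnd ℂ) (ε x) = ε (star x) := by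
    intro x
    rw [starRingEnd_apply, ← map_star]
  refine ⟨?_, ?_, ?_, ?_⟩
  · rw [hδu, hδu]
    simp only [inner_sub_left, inner_sub_right, inner_smul_left, inner_smul_right, h1,
      key, key2, key3, hu1]
    simp only [star_mul, map_mul, map_one, hconj]
    ring
  · rw [hδu, hγu, map_sub, map_smul]
    simp only [h2, key, key2, map_mul]
    module
  · intro c
    rw [hδu, hγu]
    simp only [inner_sub_left, inner_smul_left, h3, key, key2]
    simp only [inner_sub_left, inner_smul_left, hconj, map_mul, star_mul]
    ring
  · rw [hγu, hγu, h4, h4, key]
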